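/- Let x^{k+1} ∈ P_{C_s}(x^k − (1/L)∇f(x^k)) be one iteration of iterative hard thresholding with L > L(f), where ∇f is L(f)-Lipschitz. Then f(x^k) − f(x^{k+1}) ≥ ((L − L(f))/2)‖x^k − x^{k+1}‖²; consequently the sequence {f(x^k)} is nonincreasing, and if additionally f is bounded below, then ‖x^k − x^{k+1}‖ → 0 and {f(x^k)} converges. -/

import Mathlib

noncomputable section
open scoped RealInnerProductSpace

/-- the number of nonzero components of `x` -/
def norm0 {n : ℕ} (x : EuclideanSpace ℝ (Fin n)) : ℕ :=
  (Finset.univ.filter fun i => x i ≠ 0).card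

/-- the sparsity constraint set `C_s` -/
def Cs (n s : ℕ) : Set (EuclideanSpace ℝ (Fin n)) := {x | norm0 x ≤ s}

/-- the set-valued Euclidean projection onto `Cs n s` -/
def projCs (n s : ℕ) (w : EuclideanSpace ℝ (Fin n)) : Set (EuclideanSpace ℝ (Fin n)) :=
  {y | y ∈ Cs n s ∧ ∀ z ∈ Cs n s, ‖y - w‖ ≤ ‖z - w‖}

/-- the s-th largest absolute value of a component of `x` -/
def Msval {n : ℕ} (s : ℕ) (x : EuclideanSpace ℝ (Fin n)) : ℝ :=
  (((List.ofFn fun i => |x i|).mergeSort (· ≥ ·)).getD (s - 1) 0)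

section Aux
lemma grad_cont {n : ℕ} (f : EuclideanSpace ℝ (Fin n) → ℝ) (hf : ContDiff ℝ 1 f) :
    Continuous (gradient f) := by
  have h1 : Continuous (fderiv ℝ f) := hf.continuous_fderiv one_ne_zero
  have : gradient f = fun y => (InnerProductSpace.toDual ℝ _).symm (fderiv ℝ f y) := by
    funext y
    exact ((hf.differentiable one_ne_zero y).hasFDerivAt.hasGradientAt).gradient
  rw [this]
  exact (InnerProductSpace.toDual ℝ _).symm.continuous.comp h1

lemma descent {n : ℕ} (f : EuclideanSpace ℝ (Fin n) → ℝ) (hf : ContDiff ℝ 1 f)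
    (Lf : ℝ) 
    (hlip : ∀ x y, ‖gradient f x - gradient f y‖ ≤ Lf * ‖x - y‖)
    (x d : EuclideanSpace ℝ (Fin n)) :
    f (x + d) ≤ f x + ⟪gradient f x, d⟫ + Lf / 2 * ‖d‖ ^ 2 := by
  have hdiff := hf.differentiable one_ne_zero
  set φ' : ℝ → ℝ := fun t => ⟪gradient f (x + t • d), d⟫ with hφ'
  have hderiv : ∀ t : ℝ, HasDerivAt (fun t : ℝ => f (x + t • d)) (φ' t) t := by
    intro t
    have hg : HasDerivAt (fun t : ℝ => x + t • d) d t := by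
      simpa using ((hasDerivAt_id t).smul_const d).const_add x
    have hF := (hdiff (x + t • d)).hasGradientAt.hasFDerivAt
    have := hF.comp_hasDerivAt t hg
    have h' : HasDerivAt (fun t : ℝ => f (x + t • d)) _ t := this
    convert h' using 1
    simp [φ', real_inner_comm]
  have hcont : Continuous φ' := by
    have := grad_cont f hf
    exact (Continuous.inner (this.comp (by continuity)) continuous_const)
  have hint : ∫ t in (0:ℝ)..1, φ' t = f (x + d) - f x := by
    have := intervalIntegral.integral_eq_sub_of_hasDerivAt
      (f := fun t : ℝ => f (x + t • d)) (f' := φ')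
      (fun t _ => hderiv t) (hcont.intervalIntegrable 0 1)
    simpa using this
  have hbound : ∫ t in (0:ℝ)..1, φ' t ≤ ∫ t in (0:ℝ)..1, (⟪gradient f x, d⟫ + Lf * t * ‖d‖ ^ 2) := by
    apply intervalIntegral.integral_mono_on (by norm_num)
      (hcont.intervalIntegrable 0 1)
      ((continuous_const.add ((continuous_const.mul continuous_id).mul continuous_const) : Continuous fun t : ℝ => ⟪gradient f x, d⟫ + Lf * t * ‖d‖ ^ 2).intervalIntegrable 0 1)
    intro t ht
    rcases ht with ⟨ht0, ht1⟩
    have h1 : φ' t - ⟪gradient f x, d⟫ = ⟪gradient f (x + t • d) - gradient f x, d⟫ := by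
      simp [φ', inner_sub_left]
    have h2 : ⟪gradient f (x + t • d) - gradient f x, d⟫ ≤ Lf * t * ‖d‖ ^ 2 := by
      calc ⟪gradient f (x + t • d) - gradient f x, d⟫
          ≤ ‖gradient f (x + t • d) - gradient f x‖ * ‖d‖ := real_inner_le_norm _ _
        _ ≤ (Lf * ‖(x + t • d) - x‖) * ‖d‖ := by
            gcongr; exact hlip _ _
        _ = Lf * t * ‖d‖ ^ 2 := by
            rw [show (x + t • d) - x = t • d by abel]
            rw [norm_smul, Real.norm_eq_abs, abs_of_nonneg ht0]
            ring
    simp only [Pi.add_apply]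
    linarith
  have hval : ∫ t in (0:ℝ)..1, (⟪gradient f x, d⟫ + Lf * t * ‖d‖ ^ 2)
      = ⟪gradient f x, d⟫ + Lf / 2 * ‖d‖ ^ 2 := by
    have hc2 : Continuous fun t : ℝ => Lf * t * ‖d‖ ^ 2 :=
      (continuous_const.mul continuous_id).mul continuous_const
    rw [intervalIntegral.integral_add intervalIntegrable_const (hc2.intervalIntegrable 0 1)]
    have : ∫ t in (0:ℝ)..1, Lf * t * ‖d‖ ^ 2 = (Lf * ‖d‖^2) * ∫ t in (0:ℝ)..1, t := by
      rw [← intervalIntegral.integral_const_mul]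
      congr 1; funext t; ring
    rw [this]
    simp [integral_id]
    ring
  linarith [hint ▸ hbound, hval]

end Aux

/-- Basic properties of the IHT method: sufficient decrease, monotonicity,
vanishing successive differences and convergence of function values. -/
theorem stmt13 {n s : ℕ} (f : EuclideanSpace ℝ (Fin n) → ℝ) (hf : ContDiff ℝ 1 f)
    (Lf L : ℝ)
    (hlip : ∀ x y, ‖gradient f x - gradient f y‖ ≤ Lf * ‖x - y‖)
    (hL : Lf < L)
    (hbd : ∃ γ : ℝ, ∀ y, γ ≤ f y)
    (x : ℕ → EuclideanSpace ℝ (Fin n)) (hx0 : x 0 ∈ Cs n s)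
    (hiter : ∀ k, x (k + 1) ∈ projCs n s (x k - (1 / L) • gradient f (x k))) :
    (∀ k, (L - Lf) / 2 * ‖x k - x (k + 1)‖ ^ 2 ≤ f (x k) - f (x (k + 1))) ∧
    (∀ k, f (x (k + 1)) ≤ f (x k)) ∧
    Filter.Tendsto (fun k => ‖x k - x (k + 1)‖) Filter.atTop (nhds 0) ∧
    (∃ c : ℝ, Filter.Tendsto (fun k => f (x k)) Filter.atTop (nhds c)) := by
  have hxCs : ∀ k, x k ∈ Cs n s := by
    intro k
    induction k with
    | zero => exact hx0
    | succ m _ => exact (hiter m).1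
  have hproj : ∀ k, ‖x (k+1) - (x k - (1 / L) • gradient f (x k))‖
      ≤ ‖x k - (x k - (1 / L) • gradient f (x k))‖ := fun k => (hiter k).2 (x k) (hxCs k)

  have key : ∀ k, (L - Lf) / 2 * ‖x k - x (k + 1)‖ ^ 2 ≤ f (x k) - f (x (k + 1)) := by
    intro k
    by_cases hd : x (k+1) = x k
    · simp [hd]
    · -- Lf ≥ 0, L > 0
      have hdpos : (0:ℝ) < ‖x k - x (k+1)‖ := by
        rw [norm_pos_iff, sub_ne_zero]; exact fun h => hd h.symm
      have hLf : 0 ≤ Lf := by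
        have h0 := hlip (x k) (x (k+1))
        nlinarith [norm_nonneg (gradient f (x k) - gradient f (x (k+1)))]
      have hLpos : (0:ℝ) < L := lt_of_le_of_lt hLf hL
      set g := gradient f (x k) with hg
      set d := x (k+1) - x k with hdd
      -- projection inequality
      have h1 := hproj k
      have h1' : ‖d + (1/L) • g‖ ≤ ‖(1/L) • g‖ := by
        have e1 : x (k+1) - (x k - (1 / L) • g) = d + (1/L) • g := by rw [hdd]; abel
        have e2 : x k - (x k - (1 / L) • g) = (1/L) • g := by abel
        rwa [e1, e2] at h1
      have h2 : ‖d + (1/L) • g‖^2 ≤ ‖(1/L) • g‖^2 := by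
        have := norm_nonneg (d + (1/L) • g)
        nlinarith
      have h3 : ‖d‖^2 + 2 * ((1/L) * ⟪d, g⟫) ≤ 0 := by
        rw [norm_add_sq_real, real_inner_smul_right] at h2
        nlinarith
      have h4 : ⟪g, d⟫ ≤ -(L/2) * ‖d‖^2 := by
        rw [real_inner_comm]
        have := mul_le_mul_of_nonneg_left h3 (le_of_lt hLpos)
        field_simp at this ⊢
        nlinarith
      have h5 := descent f hf Lf hlip (x k) d
      have e3 : x k + d = x (k+1) := by rw [hdd]; abel
      rw [e3] at h5
      have e4 : ‖x k - x (k+1)‖ = ‖d‖ := by rw [hdd, ← norm_neg]; congr 1; abel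
      rw [e4]
      nlinarith
  have mono : ∀ k, f (x (k + 1)) ≤ f (x k) := by
    intro k
    have := key k
    nlinarith [sq_nonneg ‖x k - x (k+1)‖, hL]
  refine ⟨key, mono, ?_, ?_⟩
  · obtain ⟨γ, hγ⟩ := hbd
    have hanti : Antitone fun k => f (x k) := antitone_nat_of_succ_le mono
    have hbdd : BddBelow (Set.range fun k => f (x k)) :=
      ⟨γ, by rintro _ ⟨k, rfl⟩; exact hγ _⟩
    have hconv := tendsto_atTop_ciInf hanti hbdd
    have h2 : Filter.Tendsto (fun k => f (x (k+1))) Filter.atTop (nhds (⨅ k, f (x k))) :=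
      hconv.comp (Filter.tendsto_add_atTop_nat 1)
    have hdiff : Filter.Tendsto (fun k => f (x k) - f (x (k+1))) Filter.atTop (nhds 0) := by
      simpa using hconv.sub h2
    have hLLf : (0:ℝ) < L - Lf := by linarith
    have hsq : Filter.Tendsto (fun k => ‖x k - x (k+1)‖ ^ 2) Filter.atTop (nhds 0) := by
      apply squeeze_zero (fun k => sq_nonneg _) (g := fun k => 2 / (L - Lf) * (f (x k) - f (x (k+1))))
      · intro k
        have h := key k
        rw [div_mul_eq_mul_div, le_div_iff₀ hLLf, mul_comm]
        nlinarith
      · simpa using hdiff.const_mul (2 / (L - Lf))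
    have hs := (Real.continuous_sqrt.tendsto 0).comp hsq
    have heq : ((fun x => Real.sqrt x) ∘ fun k => ‖x k - x (k+1)‖ ^ 2)
        = fun k => ‖x k - x (k+1)‖ := by
      funext k; simp [Function.comp, Real.sqrt_sq (norm_nonneg _)]
    rw [heq] at hs
    simpa using hs
  · exact ⟨_, tendsto_atTop_ciInf (antitone_nat_of_succ_le mono)
      ⟨hbd.choose, by rintro _ ⟨k, rfl⟩; exact hbd.choose_spec _⟩⟩
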